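/- Let G be the free product of finitely many finite groups and finitely many copies of ℤ (a plain group). Then the relation ∼ on nontrivial finite-order elements of G, defined by a ∼ b iff ab has finite order, is transitive. -/

import Mathlib

open Monoid Monoid.CoprodI List
set_option linter.unusedSectionVars false

namespace PlainAux

variable {ι : Type*} [DecidableEq ι] {M : ι → Type*} [∀ i, Group (M i)]

/-- product of a letter list -/
def P (l : List (Σ i, M i)) : CoprodI M := (l.map fun x => CoprodI.of x.2).prod

@[simp] lemma P_nil : P ([] : List (Σ i, M i)) = 1 := rfl
@[simp] lemma P_cons (x : Σ i, M i) (l : List (Σ i, M i)) : P (x :: l) = CoprodI.of x.2 * P l := by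
  simp [P]
@[simp] lemma P_append (l₁ l₂ : List (Σ i, M i)) : P (l₁ ++ l₂) = P l₁ * P l₂ := by
  simp [P]
@[simp] lemma P_singleton (x : Σ i, M i) : P [x] = CoprodI.of x.2 := by simp [P]

lemma word_prod_eq (w : Word M) : w.prod = P w.toList := rfl

lemma P_revinv (l : List (Σ i, M i)) :
    P ((l.map fun x => (⟨x.1, x.2⁻¹⟩ : Σ i, M i)).reverse) = (P l)⁻¹ := by
  induction l with
  | nil => simp
  | cons x l ih => simp [ih, mul_assoc]

lemma prod_injective : Function.Injective (Word.prod : Word M → CoprodI M) := by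
  classical exact (Word.equiv (M := M)).symm.injective

lemma exists_word (x : CoprodI M) : ∃ w : Word M, w.prod = x := by
  classical exact ⟨Word.equiv x, (Word.equiv (M := M)).symm_apply_apply x⟩

lemma neword_prod_ne_one {i j : ι} (w : NeWord M i j) : w.prod ≠ 1 := by
  intro h
  have : w.toWord = Word.empty := prod_injective (by simpa [NeWord.prod] using h)
  exact w.toList_ne_nil (by simpa [NeWord.toWord] using congrArg Word.toList this)

/-- powers of a cyclically reduced NeWord -/
def nepow {i j : ι} (w : NeWord M i j) (h : j ≠ i) : ℕ → NeWord M i j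
  | 0 => w
  | n + 1 => NeWord.append w h (nepow w h n)

lemma nepow_prod {i j : ι} (w : NeWord M i j) (h : j ≠ i) (n : ℕ) :
    (nepow w h n).prod = w.prod ^ (n + 1) := by
  induction n with
  | zero => simp [nepow]
  | succ n ih => rw [nepow, NeWord.append_prod, ih, ← pow_succ']

lemma not_isOfFinOrder_neword {i j : ι} (hij : i ≠ j) (w : NeWord M i j) :
    ¬ IsOfFinOrder w.prod := by
  intro h
  obtain ⟨n, hn, hpow⟩ := isOfFinOrder_iff_pow_eq_one.1 h
  obtain ⟨m, rfl⟩ := Nat.exists_eq_add_of_lt hn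
  exact neword_prod_ne_one (nepow w (Ne.symm hij) m)
    (by rw [nepow_prod]; simpa [Nat.add_comm] using hpow)

/-- A nonempty reduced word whose first and last indices differ has infinite order. -/
lemma not_isOfFinOrder_of_cyc (w : Word M) (hne : w.toList ≠ [])
    (hij : w.toList.head?.map Sigma.fst ≠ w.toList.getLast?.map Sigma.fst) :
    ¬ IsOfFinOrder w.prod := by
  obtain ⟨i, j, w', hw'⟩ := NeWord.of_word w (by
    intro h; exact hne (by rw [h]; rfl))
  have hl : w'.toList = w.toList := congrArg Word.toList hw'
  have h1 : w.toList.head? = some ⟨i, w'.head⟩ := by rw [← hl]; exact w'.toList_head?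
  have h2 : w.toList.getLast? = some ⟨j, w'.last⟩ := by rw [← hl]; exact w'.toList_getLast?
  have hij' : i ≠ j := by
    rw [h1, h2] at hij; simpa using hij
  have : w.prod = w'.prod := by rw [NeWord.prod, hw']
  rw [this]
  exact not_isOfFinOrder_neword hij' w'

lemma isOfFinOrder_conj {G : Type*} [Group G] (u : G) {x : G} (h : IsOfFinOrder x) :
    IsOfFinOrder (u * x * u⁻¹) := by
  rw [isOfFinOrder_iff_pow_eq_one] at h ⊢
  obtain ⟨n, hn, h⟩ := h
  exact ⟨n, hn, by rw [conj_pow, h]; group⟩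

lemma isOfFinOrder_conj_iff {G : Type*} [Group G] (u : G) {x : G} :
    IsOfFinOrder (u * x * u⁻¹) ↔ IsOfFinOrder x := by
  constructor
  · intro h
    have := isOfFinOrder_conj u⁻¹ h
    simpa [mul_assoc] using this
  · exact isOfFinOrder_conj u

lemma conj_into_factor (n : ℕ) : ∀ w : Word M, w.toList.length ≤ n →
    w.prod ≠ 1 → IsOfFinOrder w.prod →
    ∃ (g : CoprodI M) (i : ι) (m : M i), m ≠ 1 ∧ w.prod = g * CoprodI.of m * g⁻¹ := by
  induction n using Nat.strong_induction_on with
  | _ n ih =>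
  rintro ⟨l, hone, hchain⟩ hlen hne hord
  simp only [word_prod_eq] at hne hord ⊢
  simp only at hlen
  match l, hone, hchain, hlen, hne, hord with
  | [], hone, hchain, hlen, hne, hord => exact absurd P_nil hne
  | [x], hone, hchain, hlen, hne, hord =>
      exact ⟨1, x.1, x.2, hone x (by simp), by simp⟩
  | ⟨i, a⟩ :: (c :: l'), hone, hchain, hlen, hne, hord => ?_
  obtain ⟨mid, ⟨j, b⟩, hdec⟩ : ∃ (L : List (Σ i, M i)) (y : Σ i, M i), c :: l' = L ++ [y] := by
    rcases List.eq_nil_or_concat (c :: l') with h | ⟨L, y, h⟩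
    · simp at h
    · exact ⟨L, y, by simpa using h⟩
  rw [hdec] at hone hchain hlen hne hord ⊢
  clear hdec
  by_cases hij : i = j
  · subst hij
    have ha : a ≠ 1 := hone ⟨i, a⟩ (by simp)
    have hb : b ≠ 1 := hone ⟨i, b⟩ (by simp)
    have hPla : P (⟨i, a⟩ :: (mid ++ [⟨i, b⟩])) =
        CoprodI.of a * P mid * CoprodI.of b := by simp [mul_assoc]
    have hz : CoprodI.of b * P (⟨i, a⟩ :: (mid ++ [⟨i, b⟩])) * (CoprodI.of b)⁻¹ =
        CoprodI.of (b * a) * P mid := by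
      rw [hPla, map_mul]; group
    have hzord : IsOfFinOrder (CoprodI.of (b * a) * P mid) := by
      rw [← hz]; exact isOfFinOrder_conj _ hord
    have hzne : CoprodI.of (b * a) * P mid ≠ 1 := by
      rw [← hz]; intro h
      apply hne
      have := congrArg (fun y => (CoprodI.of b)⁻¹ * y * CoprodI.of b) h
      simpa [mul_assoc] using this
    have hmidone : ∀ x ∈ mid, Sigma.snd x ≠ 1 := fun x hx => hone x (by simp [hx])
    have hmidchain : mid.Chain' (fun l l' => Sigma.fst l ≠ Sigma.fst l') :=
      hchain.infix ⟨[⟨i, a⟩], [⟨i, b⟩], by simp⟩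
    have hback : ∀ (g : CoprodI M) (i' : ι) (m : M i'), m ≠ 1 →
        CoprodI.of (b * a) * P mid = g * CoprodI.of m * g⁻¹ →
        ∃ (g₀ : CoprodI M) (i₀ : ι) (m₀ : M i₀), m₀ ≠ 1 ∧
          P (⟨i, a⟩ :: (mid ++ [⟨i, b⟩])) = g₀ * CoprodI.of m₀ * g₀⁻¹ := by
      intro g i' m hm heq
      refine ⟨(CoprodI.of b)⁻¹ * g, i', m, hm, ?_⟩
      have hP : P (⟨i, a⟩ :: (mid ++ [⟨i, b⟩])) =
          (CoprodI.of b)⁻¹ * (CoprodI.of (b * a) * P mid) * CoprodI.of b := by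
        rw [← hz]; group
      rw [hP, heq]; group
    by_cases hba : b * a = 1
    · rw [hba, map_one, one_mul] at hzord hzne hz
      obtain ⟨g, i', m, hm, heq⟩ :=
        ih mid.length (by simp at hlen; omega) ⟨mid, hmidone, hmidchain⟩ le_rfl hzne hzord
      exact hback g i' m hm (by rw [hba, map_one, one_mul]; exact heq)
    · have hchain' : (⟨i, b * a⟩ :: mid).Chain' (fun l l' => Sigma.fst l ≠ Sigma.fst l') := by
        refine List.isChain_cons.2 ⟨?_, hmidchain⟩
        intro y hy
        have h1 := (List.isChain_cons.1 hchain).1 y ?_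
        · exact h1
        · cases mid with
          | nil => simp at hy
          | cons z zs => simpa using hy
      have hone' : ∀ x ∈ (⟨i, b * a⟩ :: mid), Sigma.snd x ≠ 1 := by
        intro x hx
        rcases List.mem_cons.1 hx with h | h
        · subst h; exact hba
        · exact hmidone _ h
      obtain ⟨g, i', m, hm, heq⟩ :=
        ih (mid.length + 1) (by simp at hlen; omega) ⟨⟨i, b * a⟩ :: mid, hone', hchain'⟩
          (by simp) (by simpa [word_prod_eq] using hzne) (by simpa [word_prod_eq] using hzord)
      exact hback g i' m hm (by simpa [word_prod_eq] using heq)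
  · exfalso
    refine not_isOfFinOrder_of_cyc ⟨_, hone, hchain⟩ (by simp) ?_ hord
    have hhead : (⟨i, a⟩ :: (mid ++ [⟨j, b⟩]) : List (Σ i, M i)).head? = some ⟨i, a⟩ := rfl
    have hlast : (⟨i, a⟩ :: (mid ++ [⟨j, b⟩]) : List (Σ i, M i)).getLast? = some ⟨j, b⟩ := by
      rw [← List.cons_append, List.getLast?_concat]
    simp only [Word.toList, hhead, hlast, Option.map_some]
    simpa using hij

/-- Key uniqueness lemma: if `of m * s * of p * s⁻¹` has finite order with `m, p`
nontrivial letters, then the indices agree and `s` lies in the factor. -/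
lemma key (n : ℕ) : ∀ w : Word M, w.toList.length ≤ n →
    ∀ {i j : ι} (m : M i) (p : M j), m ≠ 1 → p ≠ 1 →
    IsOfFinOrder (CoprodI.of m * w.prod * CoprodI.of p * w.prod⁻¹) →
    i = j ∧ ∃ u : M i, w.prod = CoprodI.of u := by
  induction n using Nat.strong_induction_on with
  | _ n ih =>
  rintro ⟨l, hone, hchain⟩ hlen i j m p hm hp hord
  simp only [word_prod_eq] at hord ⊢
  simp only at hlen
  rcases List.eq_nil_or_concat l with rfl | ⟨mid, ⟨t, c⟩, hdec⟩
  · -- s = 1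
    by_cases hij : i = j
    · subst hij
      exact ⟨rfl, 1, by simp⟩
    · exfalso
      have h1 : ∀ x ∈ ([⟨i, m⟩, ⟨j, p⟩] : List (Σ i, M i)), Sigma.snd x ≠ 1 := by
        intro x hx
        rcases List.mem_cons.1 hx with h | h
        · subst h; exact hm
        rcases List.mem_cons.1 h with h' | h'
        · subst h'; exact hp
        · simp at h'
      have h2 : ([⟨i, m⟩, ⟨j, p⟩] : List (Σ i, M i)).Chain'
          (fun l l' => Sigma.fst l ≠ Sigma.fst l') := List.isChain_pair.2 hij
      refine not_isOfFinOrder_of_cyc ⟨[⟨i, m⟩, ⟨j, p⟩], h1, h2⟩ (by simp)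
        (by simpa using hij) ?_
      show IsOfFinOrder (P [⟨i, m⟩, ⟨j, p⟩])
      simpa [mul_assoc] using hord
  · rw [List.concat_eq_append] at hdec
    rw [hdec] at hone hchain hlen hord ⊢
    have hc : c ≠ 1 := hone ⟨t, c⟩ (by simp)
    by_cases htj : t = j
    · -- cancel the last letter of s into p
      subst htj
      have hmidone : ∀ x ∈ mid, Sigma.snd x ≠ 1 := fun x hx => hone x (by simp [hx])
      have hmidchain : mid.Chain' (fun l l' => Sigma.fst l ≠ Sigma.fst l') :=
        hchain.prefix ⟨[⟨t, c⟩], rfl⟩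
      have hp' : c * p * c⁻¹ ≠ 1 := by
        intro h
        exact hp (by
          have := congrArg (fun y => c⁻¹ * y * c) h
          simpa [mul_assoc] using this)
      have heq : CoprodI.of m * P (mid ++ [⟨t, c⟩]) * CoprodI.of p *
            (P (mid ++ [⟨t, c⟩]))⁻¹ =
          CoprodI.of m * P mid * CoprodI.of (c * p * c⁻¹) * (P mid)⁻¹ := by
        simp only [P_append, P_singleton, map_mul, map_inv]
        group
      rw [heq] at hord
      obtain ⟨hij, u, hu⟩ := ih mid.length (by simp at hlen; omega)
        ⟨mid, hmidone, hmidchain⟩ le_rfl m (c * p * c⁻¹) hm hp' hord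
      subst hij
      refine ⟨rfl, u * c, ?_⟩
      rw [word_prod_eq] at hu
      rw [P_append, P_singleton, hu, map_mul]
    · -- the last letter of s does not cancel with p
      obtain ⟨x, rest, hxr⟩ : ∃ x rest, mid ++ [⟨t, c⟩] = x :: rest := by
        cases mid with
        | nil => exact ⟨(⟨t, c⟩ : Σ i, M i), [], rfl⟩
        | cons y ys => exact ⟨y, ys ++ [(⟨t, c⟩ : Σ i, M i)], by simp⟩
      rw [hxr] at hone hchain hlen hord ⊢
      by_cases hxi : x.1 = i
      · -- conjugate away the first letter of s
        obtain ⟨u₀, a⟩ := x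
        dsimp at hxi
        subst hxi
        have ha : a ≠ 1 := hone ⟨u₀, a⟩ (by simp)
        have hrestone : ∀ y ∈ rest, Sigma.snd y ≠ 1 := fun y hy => hone y (by simp [hy])
        have hrestchain : rest.Chain' (fun l l' => Sigma.fst l ≠ Sigma.fst l') :=
          (List.isChain_cons.1 hchain).2
        have hm' : a⁻¹ * m * a ≠ 1 := by
          intro h
          exact hm (by
            have := congrArg (fun y => a * y * a⁻¹) h
            simpa [mul_assoc] using this)
        have heq : (CoprodI.of a)⁻¹ *
              (CoprodI.of m * P (⟨u₀, a⟩ :: rest) * CoprodI.of p *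
                (P (⟨u₀, a⟩ :: rest))⁻¹) * CoprodI.of a =
            CoprodI.of (a⁻¹ * m * a) * P rest * CoprodI.of p * (P rest)⁻¹ := by
          simp only [P_cons, map_mul, map_inv]
          group
        have hord' : IsOfFinOrder
            (CoprodI.of (a⁻¹ * m * a) * P rest * CoprodI.of p * (P rest)⁻¹) := by
          rw [← heq]
          have := isOfFinOrder_conj (CoprodI.of a)⁻¹ hord
          simpa [mul_assoc] using this
        obtain ⟨hij, u, hu⟩ := ih rest.length (by simp at hlen; omega)
          ⟨rest, hrestone, hrestchain⟩ le_rfl (a⁻¹ * m * a) p hm' hp hord'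
        subst hij
        refine ⟨rfl, a * u, ?_⟩
        rw [word_prod_eq] at hu
        rw [P_cons, hu, map_mul]
      · -- s starts and ends away from the factors of m and p : contradiction
        exfalso
        set f : (Σ i, M i) → (Σ i, M i) := fun y => ⟨y.1, y.2⁻¹⟩ with hf
        set lrev : List (Σ i, M i) := ((x :: rest).map f).reverse with hlrev
        have hlast : (x :: rest).getLast? = some ⟨t, c⟩ := by
          rw [← hxr]; exact List.getLast?_concat
        have hlastrev : ((x :: rest).map f).getLast? = some ⟨t, c⁻¹⟩ := by
          rw [← hxr, List.map_append]
          exact List.getLast?_concat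
        have hrevhead : lrev.head? = some ⟨t, c⁻¹⟩ := by
          rw [hlrev, List.head?_reverse]; exact hlastrev
        have hrevlast : lrev.getLast? = some (f x) := by
          rw [hlrev, List.getLast?_reverse]; simp
        have hchainrev : lrev.Chain' (fun l l' => Sigma.fst l ≠ Sigma.fst l') := by
          rw [hlrev]; refine List.isChain_reverse.2 ?_
          refine (List.isChain_map f).2 ?_
          exact hchain.imp (fun a b h => by simp only [hf]; exact fun h' => h h'.symm)
        -- the full word
        have honeL : ∀ y ∈ ([(⟨i, m⟩ : Σ i, M i)] ++ (x :: rest)) ++ ([(⟨j, p⟩ : Σ i, M i)] ++ lrev),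
            Sigma.snd y ≠ 1 := by
          intro y hy
          simp only [List.mem_append, List.mem_singleton, List.mem_reverse,
            List.mem_map, hlrev] at hy
          rcases hy with (rfl | hy) | (rfl | ⟨z, hz, rfl⟩)
          · exact hm
          · exact hone y hy
          · exact hp
          · simp only [hf, ne_eq, inv_eq_one]
            exact fun h => hone z hz (inv_eq_one.1 h)
        have hchainL : (([(⟨i, m⟩ : Σ i, M i)] ++ (x :: rest)) ++ ([(⟨j, p⟩ : Σ i, M i)] ++ lrev)).Chain'
            (fun l l' => Sigma.fst l ≠ Sigma.fst l') := by
          refine List.isChain_append.2 ⟨?_, ?_, ?_⟩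
          · refine List.isChain_append.2 ⟨List.isChain_singleton _, hchain, ?_⟩
            intro a ha b hb
            simp only [List.getLast?_singleton, Option.mem_some_iff] at ha
            simp only [List.head?_cons, Option.mem_some_iff] at hb
            subst ha; subst hb
            exact fun h => hxi h.symm
          · refine List.isChain_append.2 ⟨List.isChain_singleton _, hchainrev, ?_⟩
            intro a ha b hb
            simp only [List.getLast?_singleton, Option.mem_some_iff] at ha
            rw [hrevhead] at hb
            simp only [Option.mem_some_iff] at hb
            subst ha; subst hb
            exact fun h => htj h.symm
          · intro a ha b hb
            rw [List.getLast?_append_of_ne_nil _ (by simp), hlast] at ha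
            simp only [Option.mem_some_iff] at ha hb
            simp only [List.head?_append, List.head?_cons] at hb
            subst ha
            have hb' : ⟨j, p⟩ = b := by simpa using hb
            rw [← hb']
            exact htj
        have hheadL : ((([(⟨i, m⟩ : Σ i, M i)] ++ (x :: rest)) ++ ([(⟨j, p⟩ : Σ i, M i)] ++ lrev))).head? =
            some ⟨i, m⟩ := rfl
        have hlastL : ((([(⟨i, m⟩ : Σ i, M i)] ++ (x :: rest)) ++ ([(⟨j, p⟩ : Σ i, M i)] ++ lrev))).getLast? =
            some (f x) := by
          rw [List.getLast?_append_of_ne_nil _ (by simp [hlrev]),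
            List.getLast?_append_of_ne_nil _ (by simp [hlrev])]
          exact hrevlast
        have hprodL : P (([(⟨i, m⟩ : Σ i, M i)] ++ (x :: rest)) ++ ([(⟨j, p⟩ : Σ i, M i)] ++ lrev)) =
            CoprodI.of m * P (x :: rest) * CoprodI.of p * (P (x :: rest))⁻¹ := by
          simp only [P_append, P_singleton, hlrev, hf]
          rw [P_revinv]
          group
        refine not_isOfFinOrder_of_cyc ⟨_, honeL, hchainL⟩ (by simp) ?_ ?_
        · show Option.map _ (([(⟨i, m⟩ : Σ i, M i)] ++ (x :: rest)) ++ ([(⟨j, p⟩ : Σ i, M i)] ++ lrev)).head? ≠ _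
          rw [hheadL, hlastL]
          simp only [Option.map_some]
          intro h
          exact hxi (by simpa [hf] using h.symm)
        · show IsOfFinOrder (P _)
          rw [hprodL]
          exact hord

lemma finorder_of_of {i : ι} {m : M i} (h : IsOfFinOrder (CoprodI.of m)) :
    IsOfFinOrder m := by
  rw [isOfFinOrder_iff_pow_eq_one] at h ⊢
  obtain ⟨k, hk, h⟩ := h
  refine ⟨k, hk, CoprodI.of_injective i ?_⟩
  rw [map_pow, h, map_one]

lemma key' {s : CoprodI M} {i j : ι} {m : M i} {p : M j} (hm : m ≠ 1) (hp : p ≠ 1)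
    (hord : IsOfFinOrder (CoprodI.of m * s * CoprodI.of p * s⁻¹)) :
    i = j ∧ ∃ u : M i, s = CoprodI.of u := by
  obtain ⟨w, hw⟩ := exists_word s
  subst hw
  exact key w.toList.length w le_rfl m p hm hp hord

lemma conj_into_factor' {a : CoprodI M} (ha : a ≠ 1) (hoa : IsOfFinOrder a) :
    ∃ (g : CoprodI M) (i : ι) (m : M i), m ≠ 1 ∧ a = g * CoprodI.of m * g⁻¹ := by
  obtain ⟨w, hw⟩ := exists_word a
  subst hw
  exact conj_into_factor w.toList.length w le_rfl ha hoa

theorem coprodI_trans (hM : ∀ i : ι, Finite (M i) ∨ ∀ m : M i, IsOfFinOrder m → m = 1)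
    (a b c : CoprodI M) (ha : a ≠ 1) (hb : b ≠ 1) (hc : c ≠ 1)
    (hoa : IsOfFinOrder a) (hob : IsOfFinOrder b) (hoc : IsOfFinOrder c)
    (hab : IsOfFinOrder (a * b)) (hbc : IsOfFinOrder (b * c)) :
    IsOfFinOrder (a * c) := by
  obtain ⟨g, ia, m, hm, hA⟩ := conj_into_factor' ha hoa
  obtain ⟨h, ib, nn, hn, hB⟩ := conj_into_factor' hb hob
  obtain ⟨kk, ic, pp, hpp, hC⟩ := conj_into_factor' hc hoc
  have hzab : CoprodI.of m * (g⁻¹ * h) * CoprodI.of nn * (g⁻¹ * h)⁻¹ =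
      g⁻¹ * (a * b) * g := by
    rw [hA, hB]; group
  have hzbc : CoprodI.of nn * (h⁻¹ * kk) * CoprodI.of pp * (h⁻¹ * kk)⁻¹ =
      h⁻¹ * (b * c) * h := by
    rw [hB, hC]; group
  obtain ⟨hij, u, hu⟩ := key' hm hn (by
    rw [hzab]
    have := isOfFinOrder_conj g⁻¹ hab
    simpa [mul_assoc] using this)
  obtain ⟨hjl, v, hv⟩ := key' hn hpp (by
    rw [hzbc]
    have := isOfFinOrder_conj h⁻¹ hbc
    simpa [mul_assoc] using this)
  subst hij
  subst hjl
  have hk : kk = g * CoprodI.of (u * v) := by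
    rw [map_mul, ← hu, ← hv]; group
  have hac : a * c = g * CoprodI.of (m * (u * v * pp * (u * v)⁻¹)) * g⁻¹ := by
    rw [hA, hC, hk]
    simp only [map_mul, map_inv]
    group
  rw [hac, isOfFinOrder_conj_iff]
  apply (CoprodI.of (i := ia)).isOfFinOrder
  rcases hM ia with hfin | htf
  · exact isOfFinOrder_of_finite _
  · exfalso
    apply hm
    apply htf
    apply finorder_of_of (m := m)
    have : CoprodI.of m = g⁻¹ * a * g := by rw [hA]; group
    rw [this]
    have := isOfFinOrder_conj g⁻¹ hoa
    simpa [mul_assoc] using this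

end PlainAux

namespace PlainAux2

open PlainAux Monoid.Coprod

universe u

variable {k q : ℕ}

/-- The family of factor groups of a plain group. -/
def Kfam (H : Fin k → Type u) (q : ℕ) : Fin k ⊕ Fin q → Type u
  | .inl i => H i
  | .inr _ => ULift (Multiplicative ℤ)

instance (H : Fin k → Type u) [∀ i, Group (H i)] (q : ℕ) : ∀ x, Group (Kfam H q x)
  | .inl i => inferInstanceAs (Group (H i))
  | .inr _ => inferInstanceAs (Group (ULift (Multiplicative ℤ)))

variable (H : Fin k → Type u) [∀ i, Group (H i)] (q : ℕ)

/-- the factor inclusions for the backward map -/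
def ψfam : ∀ x : Fin k ⊕ Fin q, Kfam H q x →* Coprod (CoprodI H) (FreeGroup (Fin q)) :=
  fun x =>
  match x with
  | .inl i => Coprod.inl.comp (CoprodI.of (M := H) (i := i))
  | .inr j => Coprod.inr.comp
      ((zpowersHom _ (FreeGroup.of j)).comp MulEquiv.ulift.toMonoidHom)

/-- forward map -/
def φ : Coprod (CoprodI H) (FreeGroup (Fin q)) →* CoprodI (Kfam H q) :=
  Coprod.lift
    (CoprodI.lift fun i => (CoprodI.of (M := Kfam H q) (i := .inl i)))
    (FreeGroup.lift fun j =>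
      CoprodI.of (M := Kfam H q) (i := .inr j) ⟨Multiplicative.ofAdd 1⟩)

/-- backward map -/
def ψ : CoprodI (Kfam H q) →* Coprod (CoprodI H) (FreeGroup (Fin q)) :=
  CoprodI.lift (ψfam H q)

lemma ψ_of_inl (i : Fin k) (m : H i) :
    ψ H q (CoprodI.of (M := Kfam H q) (i := .inl i) m) = Coprod.inl (CoprodI.of m) := by
  unfold ψ
  exact CoprodI.lift_of (M := Kfam H q) (ψfam H q) (i := .inl i) m

lemma ψ_of_inr (j : Fin q) (m : ULift (Multiplicative ℤ)) :
    ψ H q (CoprodI.of (M := Kfam H q) (i := .inr j) m) =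
      Coprod.inr (FreeGroup.of j ^ (Multiplicative.toAdd m.down)) := by
  unfold ψ
  exact CoprodI.lift_of (M := Kfam H q) (ψfam H q) (i := .inr j) m

lemma φ_inl_of (i : Fin k) (m : H i) :
    φ H q (Coprod.inl (CoprodI.of m)) = CoprodI.of (M := Kfam H q) (i := .inl i) m := by
  rw [φ, Coprod.lift_apply_inl]
  exact CoprodI.lift_of _ m

lemma φ_inr_of (j : Fin q) :
    φ H q (Coprod.inr (FreeGroup.of j)) =
      CoprodI.of (M := Kfam H q) (i := .inr j) ⟨Multiplicative.ofAdd 1⟩ := by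
  rw [φ, Coprod.lift_apply_inr, FreeGroup.lift_apply_of]

lemma psi_phi : (ψ H q).comp (φ H q) = MonoidHom.id _ := by
  apply Coprod.hom_ext
  · apply CoprodI.ext_hom
    intro i
    ext x
    simp only [MonoidHom.coe_comp, Function.comp_apply, MonoidHom.id_comp]
    rw [φ_inl_of, ψ_of_inl]
  · apply FreeGroup.ext_hom
    intro j
    simp only [MonoidHom.coe_comp, Function.comp_apply, MonoidHom.id_comp]
    rw [φ_inr_of, ψ_of_inr]
    norm_num

lemma phi_psi : (φ H q).comp (ψ H q) = MonoidHom.id _ := by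
  apply CoprodI.ext_hom
  intro x
  match x with
  | .inl i =>
    ext m
    simp only [MonoidHom.coe_comp, Function.comp_apply, MonoidHom.id_comp]
    exact (congrArg (φ H q) (ψ_of_inl H q i m)).trans (φ_inl_of H q i m)
  | .inr j =>
    have key1 : (φ H q) ((ψ H q) (CoprodI.of (M := Kfam H q) (i := .inr j)
        (⟨Multiplicative.ofAdd (1 : ℤ)⟩ : ULift (Multiplicative ℤ)))) =
        CoprodI.of (M := Kfam H q) (i := .inr j)
          (⟨Multiplicative.ofAdd (1 : ℤ)⟩ : ULift (Multiplicative ℤ)) := by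
      rw [ψ_of_inr]
      norm_num [φ_inr_of]
    have this1 : ∀ z : Kfam H q (.inr j),
        (φ H q) ((ψ H q) (CoprodI.of (M := Kfam H q) (i := .inr j) z)) =
        CoprodI.of (M := Kfam H q) (i := .inr j) z := by
      intro z
      obtain ⟨z⟩ := z
      induction z using Multiplicative.rec with
      | _ n =>
      induction n using Int.induction_on with
      | zero =>
          have h1 : ((⟨Multiplicative.ofAdd (0 : ℤ)⟩ : ULift (Multiplicative ℤ)) :
              Kfam H q (.inr j)) = 1 := rfl
          erw [h1, map_one, map_one]
      | succ n ih =>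
          have hsplit : ((⟨Multiplicative.ofAdd ((n : ℤ) + 1)⟩ : ULift (Multiplicative ℤ)) :
                Kfam H q (.inr j)) =
              (⟨Multiplicative.ofAdd (n : ℤ)⟩ : ULift (Multiplicative ℤ)) *
                ⟨Multiplicative.ofAdd (1 : ℤ)⟩ := by
            rw [ULift.ext_iff]
            simp [← ofAdd_add]
          erw [hsplit, map_mul, map_mul, map_mul, ih, key1]
      | pred n ih =>
          have hsplit : ((⟨Multiplicative.ofAdd (-(n : ℤ) - 1)⟩ : ULift (Multiplicative ℤ)) :
                Kfam H q (.inr j)) =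
              (⟨Multiplicative.ofAdd (-(n : ℤ))⟩ : ULift (Multiplicative ℤ)) *
                (⟨Multiplicative.ofAdd (1 : ℤ)⟩ : ULift (Multiplicative ℤ))⁻¹ := by
            rw [ULift.ext_iff]
            simp [← ofAdd_add, ← ofAdd_neg, sub_eq_add_neg]
          erw [hsplit, map_mul, map_mul, map_mul, ih]
          congr 1
    ext z
    simpa using this1 z

/-- The plain group as an iterated free product. -/
def plainEquiv : Coprod (CoprodI H) (FreeGroup (Fin q)) ≃* CoprodI (Kfam H q) :=
  MonoidHom.toMulEquiv (φ H q) (ψ H q) (psi_phi H q) (phi_psi H q)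

lemma mult_int_tf (x : Multiplicative ℤ) (h : IsOfFinOrder x) : x = 1 := by
  rw [isOfFinOrder_iff_pow_eq_one] at h
  obtain ⟨n, hn, h⟩ := h
  have h2 := congrArg Multiplicative.toAdd h
  rw [toAdd_pow] at h2
  have h3 : (n : ℤ) * x.toAdd = 0 := by simpa [nsmul_eq_mul] using h2
  rcases mul_eq_zero.1 h3 with h4 | h4
  · exact absurd ((by exact_mod_cast h4) : n = 0) (by omega)
  · rw [← ofAdd_toAdd x, h4]
    rfl

lemma Kfam_cond [∀ i, Finite (H i)] :
    ∀ x, Finite (Kfam H q x) ∨ ∀ m : Kfam H q x, IsOfFinOrder m → m = 1 := by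
  intro x
  match x with
  | .inl i => exact Or.inl (inferInstanceAs (Finite (H i)))
  | .inr j =>
    refine Or.inr fun m hm => ?_
    have h1 : IsOfFinOrder (MulEquiv.ulift (α := Multiplicative ℤ) m) := by
      have := (MulEquiv.ulift (α := Multiplicative ℤ)).toMonoidHom.isOfFinOrder hm
      simpa using this
    have h2 := mult_int_tf _ h1
    exact MulEquiv.ulift.injective (h2.trans (map_one (MulEquiv.ulift.{0, u} (α := Multiplicative ℤ))).symm)

end PlainAux2


open Monoid

/-- In a plain group (a free product of finitely many finite groups and a free
group of finite rank), the relation `a ∼ b ↔ IsOfFinOrder (a * b)` is transitive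
on nontrivial finite-order elements. -/
theorem plain_group_sim_transitive {k q : ℕ} (H : Fin k → Type*)
    [∀ i, Group (H i)] [∀ i, Finite (H i)] :
    ∀ a b c : Coprod (CoprodI H) (FreeGroup (Fin q)),
      a ≠ 1 → b ≠ 1 → c ≠ 1 →
      IsOfFinOrder a → IsOfFinOrder b → IsOfFinOrder c →
      IsOfFinOrder (a * b) → IsOfFinOrder (b * c) → IsOfFinOrder (a * c) := by
  intro a b c ha hb hc hoa hob hoc hab hbc
  set e := PlainAux2.plainEquiv H q with he
  have hmap : ∀ x : Coprod (CoprodI H) (FreeGroup (Fin q)), x ≠ 1 → e x ≠ 1 := by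
    intro x hx h
    exact hx (e.injective (by simpa using h))
  have hord : ∀ x : Coprod (CoprodI H) (FreeGroup (Fin q)),
      IsOfFinOrder x → IsOfFinOrder (e x) := by
    intro x h
    have := e.toMonoidHom.isOfFinOrder h
    simpa using this
  have hfin := PlainAux.coprodI_trans (PlainAux2.Kfam_cond H q) (e a) (e b) (e c)
    (hmap a ha) (hmap b hb) (hmap c hc) (hord a hoa) (hord b hob) (hord c hoc)
    (by rw [← map_mul]; exact hord _ hab) (by rw [← map_mul]; exact hord _ hbc)
  have h2 : IsOfFinOrder (e (a * c)) := by rw [map_mul]; exact hfin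
  have h3 := e.symm.toMonoidHom.isOfFinOrder h2
  simpa using h3
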